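/- Every coset of Γ_q(k) in k[x_0,...,x_m] contains a unique projectively reduced polynomial; i.e., for every f there is a unique projectively reduced g with f - g ∈ Γ_q(k), namely g = f̄. -/

import Mathlib

open MvPolynomial Finset

/-- Reduce an exponent modulo `q-1`: unchanged if `≤ q-1`, otherwise the
representative in `{1,...,q-1}` congruent to it modulo `q-1`. -/
def redExp (q a : ℕ) : ℕ := if a ≤ q - 1 then a else (a - 1) % (q - 1) + 1

lemma redExp_zero (q : ℕ) : redExp q 0 = 0 := by simp [redExp]

lemma redExp_le_self (q a : ℕ) : redExp q a ≤ a := by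
  rw [redExp]; split_ifs with h
  · exact le_rfl
  · have := Nat.mod_le (a - 1) (q - 1); omega

lemma redExp_pos (q : ℕ) {a : ℕ} (ha : 0 < a) : 0 < redExp q a := by
  rw [redExp]; split_ifs with h <;> omega

lemma redExp_eq_zero_iff (q a : ℕ) : redExp q a = 0 ↔ a = 0 := by
  constructor
  · intro h; by_contra ha
    have := redExp_pos q (Nat.pos_of_ne_zero ha); omega
  · rintro rfl; exact redExp_zero q

lemma redExp_le (q : ℕ) (hq : 2 ≤ q) (a : ℕ) : redExp q a ≤ q - 1 := by
  rw [redExp]; split_ifs with h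
  · exact h
  · have : (a - 1) % (q - 1) < q - 1 := Nat.mod_lt _ (by omega)
    omega

lemma redExp_idem (q a : ℕ) : redExp q (redExp q a) = redExp q a := by
  by_cases hq : 2 ≤ q
  · have := redExp_le q hq a
    rw [redExp, if_pos this]
  · have hq1 : q - 1 = 0 := by omega
    simp only [redExp, hq1, Nat.mod_zero, Nat.le_zero]
    split_ifs with h1 h2 h3 <;> omega

lemma redExp_sub (q : ℕ) (hq : 2 ≤ q) {a : ℕ} (ha : q ≤ a) :
    redExp q (a - (q - 1)) = redExp q a := by
  have h1 : ¬ a ≤ q - 1 := by omega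
  rw [redExp, redExp, if_neg h1]
  split_ifs with h2
  · -- a - (q-1) ≤ q - 1
    have he : a - 1 = (a - q) + (q - 1) := by omega
    rw [he, Nat.add_mod_right, Nat.mod_eq_of_lt (by omega)]
    omega
  · have he : a - 1 = (a - (q - 1) - 1) + (q - 1) := by omega
    rw [he, Nat.add_mod_right]

lemma pow_redExp {q : ℕ} (hq : 2 ≤ q) {F : Type*} [Monoid F] (b : F) (hb : b ^ q = b) (a : ℕ) :
    b ^ redExp q a = b ^ a := by
  induction a using Nat.strong_induction_on with
  | _ a ih =>
    by_cases h : a ≤ q - 1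
    · rw [redExp, if_pos h]
    · have hqa : q ≤ a := by omega
      have h1 : b ^ (a - (q - 1)) = b ^ a := by
        have h2 : a = (a - q) + q := by omega
        have _h3 : a - (q - 1) = (a - q) + 1 := by omega
        calc b ^ (a - (q - 1)) = b ^ (a - q) * b := by rw [show a - (q - 1) = (a - q) + 1 by omega, pow_succ]
        _ = b ^ (a - q) * b ^ q := by rw [hb]
        _ = b ^ a := by rw [← pow_add, ← h2]
      rw [← redExp_sub q hq hqa, ih _ (by omega), h1]

/-- Projective reduction of a monomial (given by its exponent vector): all exponents
below the top variable of the support are reduced modulo `q-1`, and the difference is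
transferred to the exponent of the top variable. -/
noncomputable def projRed (q : ℕ) {m : ℕ} (μ : Fin (m + 1) →₀ ℕ) : Fin (m + 1) →₀ ℕ :=
  if h : μ.support.Nonempty then
    letI ℓ := μ.support.max' h
    Finsupp.equivFunOnFinite.symm fun i =>
      if i < ℓ then redExp q (μ i)
      else if i = ℓ then μ ℓ + ∑ j ∈ Finset.univ.filter (· < ℓ), (μ j - redExp q (μ j))
      else 0
  else 0

section ProjRed

variable {q m : ℕ} {μ : Fin (m + 1) →₀ ℕ}

lemma projRed_apply (h : μ.support.Nonempty) (i : Fin (m + 1)) :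
    projRed q μ i =
      if i < μ.support.max' h then redExp q (μ i)
      else if i = μ.support.max' h then
        μ (μ.support.max' h) +
          ∑ j ∈ Finset.univ.filter (· < μ.support.max' h), (μ j - redExp q (μ j))
      else 0 := by
  rw [projRed, dif_pos h]
  rfl

lemma projRed_apply_lt (h : μ.support.Nonempty) {i : Fin (m + 1)}
    (hi : i < μ.support.max' h) : projRed q μ i = redExp q (μ i) := by
  rw [projRed_apply h, if_pos hi]

lemma projRed_apply_gt (h : μ.support.Nonempty) {i : Fin (m + 1)}
    (hi : μ.support.max' h < i) : projRed q μ i = 0 := by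
  rw [projRed_apply h, if_neg (by omega), if_neg (by omega)]

lemma projRed_apply_top (h : μ.support.Nonempty) :
    projRed q μ (μ.support.max' h) =
      μ (μ.support.max' h) +
        ∑ j ∈ Finset.univ.filter (· < μ.support.max' h), (μ j - redExp q (μ j)) := by
  rw [projRed_apply h, if_neg (lt_irrefl _), if_pos rfl]

lemma apply_eq_zero_of_max'_lt (h : μ.support.Nonempty) {i : Fin (m + 1)}
    (hi : μ.support.max' h < i) : μ i = 0 := by
  by_contra hne
  exact absurd (Finset.le_max' _ i (Finsupp.mem_support_iff.mpr hne)) (by omega)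

lemma projRed_top_pos (h : μ.support.Nonempty) : 0 < projRed q μ (μ.support.max' h) := by
  rw [projRed_apply_top h]
  have : μ (μ.support.max' h) ≠ 0 := Finsupp.mem_support_iff.mp (Finset.max'_mem _ h)
  omega

lemma projRed_support_nonempty (h : μ.support.Nonempty) : (projRed q μ).support.Nonempty :=
  ⟨_, Finsupp.mem_support_iff.mpr (projRed_top_pos h).ne'⟩

lemma projRed_support_max' (h : μ.support.Nonempty) :
    (projRed q μ).support.max' (projRed_support_nonempty h) = μ.support.max' h := by
  refine le_antisymm (Finset.max'_le _ _ _ fun i hi => ?_)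
    (Finset.le_max' _ _ (Finsupp.mem_support_iff.mpr (projRed_top_pos h).ne'))
  by_contra hlt
  exact Finsupp.mem_support_iff.mp hi (projRed_apply_gt h (by omega))

lemma projRed_idem (q : ℕ) (μ : Fin (m + 1) →₀ ℕ) :
    projRed q (projRed q μ) = projRed q μ := by
  by_cases h : μ.support.Nonempty
  · have h2 := projRed_support_nonempty (q := q) h
    have hmax := projRed_support_max' (q := q) h
    ext i
    rw [projRed_apply h2 i, hmax]
    rcases lt_trichotomy i (μ.support.max' h) with hi | hi | hi
    · rw [if_pos hi, projRed_apply_lt h hi, redExp_idem, ← projRed_apply_lt h hi]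
    · subst hi
      rw [if_neg (lt_irrefl _), if_pos rfl]
      have : ∀ j ∈ Finset.univ.filter (· < μ.support.max' h),
          projRed q μ j - redExp q (projRed q μ j) = 0 := by
        intro j hj
        have hj' : j < μ.support.max' h := by simpa using hj
        rw [projRed_apply_lt h hj', redExp_idem]
        omega
      rw [Finset.sum_congr rfl this, Finset.sum_const_zero, add_zero]
    · rw [if_neg (by omega), if_neg (by omega), projRed_apply_gt h hi]
  · rw [Finsupp.support_eq_empty.mp (Finset.not_nonempty_iff_eq_empty.mp h)]
    have : projRed q (0 : Fin (m + 1) →₀ ℕ) = 0 := by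
      rw [projRed, dif_neg (by simp)]
    rw [this]; exact this

end ProjRed

/-- Projective reduction of a polynomial: the linear extension of projective
reduction of monomials. -/
noncomputable def polyRed (q : ℕ) {m : ℕ} {k : Type} [CommRing k]
    (f : MvPolynomial (Fin (m + 1)) k) : MvPolynomial (Fin (m + 1)) k :=
  f.support.sum fun μ => monomial (projRed q μ) (coeff μ f)

section PolyRed

variable {q m : ℕ} {k : Type} [CommRing k]

lemma coeff_polyRed (f : MvPolynomial (Fin (m + 1)) k) (ν : Fin (m + 1) →₀ ℕ) :
    coeff ν (polyRed q f) = ∑ μ ∈ f.support, if projRed q μ = ν then coeff μ f else 0 := by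
  rw [polyRed, coeff_sum]
  exact Finset.sum_congr rfl fun μ _ => coeff_monomial ν (projRed q μ) _

lemma coeff_polyRed_superset {f : MvPolynomial (Fin (m + 1)) k} {s : Finset (Fin (m + 1) →₀ ℕ)}
    (hs : f.support ⊆ s) (ν : Fin (m + 1) →₀ ℕ) :
    coeff ν (polyRed q f) = ∑ μ ∈ s, if projRed q μ = ν then coeff μ f else 0 := by
  rw [coeff_polyRed]
  refine Finset.sum_subset hs fun μ _ hμ => ?_
  rw [MvPolynomial.notMem_support_iff.mp hμ]
  simp

lemma projRed_fix_of_mem_support {f : MvPolynomial (Fin (m + 1)) k} {ν : Fin (m + 1) →₀ ℕ}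
    (hν : ν ∈ (polyRed q f).support) : projRed q ν = ν := by
  have hc := MvPolynomial.mem_support_iff.mp hν
  rw [coeff_polyRed] at hc
  obtain ⟨μ, _, hμ⟩ := Finset.exists_ne_zero_of_sum_ne_zero hc
  have : projRed q μ = ν := by by_contra hcon; simp [hcon] at hμ
  rw [← this, projRed_idem]

lemma polyRed_polyRed (f : MvPolynomial (Fin (m + 1)) k) :
    polyRed q (polyRed q f) = polyRed q f := by
  conv_rhs => rw [← support_sum_monomial_coeff (polyRed q f)]
  exact Finset.sum_congr rfl fun ν hν => by rw [projRed_fix_of_mem_support hν]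

lemma polyRed_sub (f g : MvPolynomial (Fin (m + 1)) k) :
    polyRed q (f - g) = polyRed q f - polyRed q g := by
  apply MvPolynomial.ext
  intro ν
  have hsub : (f - g).support ⊆ f.support ∪ g.support := Finsupp.support_sub
  rw [coeff_sub, coeff_polyRed_superset hsub,
    coeff_polyRed_superset (Finset.subset_union_left (s₂ := g.support)),
    coeff_polyRed_superset (Finset.subset_union_right (s₁ := f.support)),
    ← Finset.sum_sub_distrib]
  refine Finset.sum_congr rfl fun μ _ => ?_
  rw [coeff_sub]
  split_ifs <;> simp

end PolyRed

/-- The ideal generated by the Fermat polynomials `X i ^ q * X j - X i * X j ^ q`. -/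
noncomputable def fermatIdeal (q m : ℕ) (k : Type) [CommRing k] : Ideal (MvPolynomial (Fin (m + 1)) k) :=
  Ideal.span {f | ∃ i j : Fin (m + 1), i < j ∧ f = X i ^ q * X j - X i * X j ^ q}

section Fermat

variable {q m : ℕ} {k : Type} [CommRing k]

local notation "π" => Ideal.Quotient.mk (fermatIdeal q m k)

lemma pi_rel {i j : Fin (m + 1)} (hij : i < j) :
    π (X i ^ q * X j) = π (X i * X j ^ q) :=
  Ideal.Quotient.eq.mpr (Ideal.subset_span ⟨i, j, hij, rfl⟩)

lemma pi_pow_swap (hq : 2 ≤ q) {i j : Fin (m + 1)} (hij : i < j) (a : ℕ) :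
    ∀ b, 1 ≤ b →
      π (X i ^ a * X j ^ b) = π (X i ^ redExp q a * X j ^ (b + (a - redExp q a))) := by
  induction a using Nat.strong_induction_on with
  | _ a ih =>
    intro b hb
    by_cases h : a ≤ q - 1
    · rw [redExp, if_pos h, Nat.sub_self, add_zero]
    · obtain ⟨a', rfl⟩ : ∃ a', a = a' + q := ⟨a - q, by omega⟩
      obtain ⟨b', rfl⟩ : ∃ b', b = b' + 1 := ⟨b - 1, by omega⟩
      have hsplit : (X i ^ (a' + q) * X j ^ (b' + 1) : MvPolynomial (Fin (m + 1)) k)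
          = (X i ^ a' * X j ^ b') * (X i ^ q * X j) := by ring
      have hsplit2 : (X i ^ a' * X j ^ b') * (X i * X j ^ q)
          = (X i ^ (a' + 1) * X j ^ (b' + q) : MvPolynomial (Fin (m + 1)) k) := by ring
      rw [hsplit, map_mul, pi_rel hij, ← map_mul, hsplit2,
        ih (a' + 1) (by omega) (b' + q) (by omega)]
      have h1 : redExp q (a' + 1) = redExp q (a' + q) := by
        rw [← redExp_sub q hq (by omega : q ≤ a' + q),
          show a' + q - (q - 1) = a' + 1 by omega]
      have h2 : redExp q (a' + q) ≤ a' + 1 := h1 ▸ redExp_le_self q (a' + 1)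
      rw [h1, show b' + q + (a' + 1 - redExp q (a' + q))
          = b' + 1 + (a' + q - redExp q (a' + q)) by omega]

lemma pi_prod_swap (hq : 2 ≤ q) {μ : Fin (m + 1) →₀ ℕ} (h : μ.support.Nonempty)
    (s : Finset (Fin (m + 1))) (hs : ∀ i ∈ s, i < μ.support.max' h) :
    ∀ b, 1 ≤ b →
      π ((∏ i ∈ s, X i ^ μ i) * X (μ.support.max' h) ^ b) =
      π ((∏ i ∈ s, X i ^ redExp q (μ i)) *
          X (μ.support.max' h) ^ (b + ∑ i ∈ s, (μ i - redExp q (μ i)))) := by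
  classical
  induction s using Finset.induction_on with
  | empty => simp
  | insert i s hnotmem ih =>
    intro b hb
    have hi : i < μ.support.max' h := hs i (Finset.mem_insert_self i s)
    have ihs := ih (fun j hj => hs j (Finset.mem_insert_of_mem hj)) b hb
    rw [Finset.prod_insert hnotmem, Finset.prod_insert hnotmem, Finset.sum_insert hnotmem]
    calc π (X i ^ μ i * (∏ j ∈ s, X j ^ μ j) * X (μ.support.max' h) ^ b)
        = π (X i ^ μ i) * π ((∏ j ∈ s, X j ^ μ j) * X (μ.support.max' h) ^ b) := by
          rw [← map_mul, mul_assoc]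
      _ = π (X i ^ μ i) * π ((∏ j ∈ s, X j ^ redExp q (μ j)) *
            X (μ.support.max' h) ^ (b + ∑ j ∈ s, (μ j - redExp q (μ j)))) := by rw [ihs]
      _ = π (∏ j ∈ s, X j ^ redExp q (μ j)) *
            π (X i ^ μ i * X (μ.support.max' h) ^ (b + ∑ j ∈ s, (μ j - redExp q (μ j)))) := by
          rw [← map_mul, ← map_mul]; exact congrArg _ (by ring)
      _ = π (∏ j ∈ s, X j ^ redExp q (μ j)) *
            π (X i ^ redExp q (μ i) * X (μ.support.max' h) ^
              ((b + ∑ j ∈ s, (μ j - redExp q (μ j))) + (μ i - redExp q (μ i)))) := by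
          rw [pi_pow_swap hq hi _ _ (by omega)]
      _ = π (X i ^ redExp q (μ i) * (∏ j ∈ s, X j ^ redExp q (μ j)) *
            X (μ.support.max' h) ^ (b + (μ i - redExp q (μ i) + ∑ j ∈ s, (μ j - redExp q (μ j))))) := by
          rw [← map_mul]
          refine congrArg _ ?_
          rw [show (b + ∑ j ∈ s, (μ j - redExp q (μ j))) + (μ i - redExp q (μ i))
              = b + (μ i - redExp q (μ i) + ∑ j ∈ s, (μ j - redExp q (μ j))) by omega]
          ring

lemma monomial_eq_prod (μ : Fin (m + 1) →₀ ℕ) (c : k) :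
    monomial μ c = C c * ∏ i, X i ^ μ i := by
  rw [monomial_eq]
  congr 1
  exact Finsupp.prod_fintype _ _ fun i => pow_zero _

lemma prod_eq_prod_lt_mul_top {μ : Fin (m + 1) →₀ ℕ} (h : μ.support.Nonempty) :
    (∏ i, X i ^ μ i : MvPolynomial (Fin (m + 1)) k) =
      (∏ i ∈ Finset.univ.filter (· < μ.support.max' h), X i ^ μ i) *
        X (μ.support.max' h) ^ μ (μ.support.max' h) := by
  rw [← Finset.prod_filter_mul_prod_filter_not Finset.univ (· < μ.support.max' h)]
  congr 1
  refine Finset.prod_eq_single_of_mem _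
    (Finset.mem_filter.mpr ⟨Finset.mem_univ _, lt_irrefl _⟩) fun i hi hne => ?_
  have : μ.support.max' h < i := by
    simp only [Finset.mem_filter, Finset.mem_univ, true_and, not_lt] at hi
    exact lt_of_le_of_ne hi (by simpa [eq_comm] using hne)
  rw [apply_eq_zero_of_max'_lt h this, pow_zero]

lemma pi_monomial (hq : 2 ≤ q) (μ : Fin (m + 1) →₀ ℕ) (c : k) :
    π (monomial μ c) = π (monomial (projRed q μ) c) := by
  by_cases h : μ.support.Nonempty
  · have h2 : (projRed q μ).support.Nonempty := projRed_support_nonempty h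
    have hmax : (projRed q μ).support.max' h2 = μ.support.max' h := projRed_support_max' h
    have hμℓ : 1 ≤ μ (μ.support.max' h) :=
      Nat.one_le_iff_ne_zero.mpr (Finsupp.mem_support_iff.mp (Finset.max'_mem _ h))
    have hkey : (∏ i ∈ Finset.univ.filter (· < μ.support.max' h), X i ^ redExp q (μ i) :
          MvPolynomial (Fin (m + 1)) k) *
          X (μ.support.max' h) ^ (μ (μ.support.max' h) +
            ∑ i ∈ Finset.univ.filter (· < μ.support.max' h), (μ i - redExp q (μ i)))
        = (∏ i ∈ Finset.univ.filter (· < μ.support.max' h), X i ^ (projRed q μ) i) *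
          X (μ.support.max' h) ^ (projRed q μ) (μ.support.max' h) := by
      rw [projRed_apply_top h]
      congr 1
      exact Finset.prod_congr rfl fun i hi => by
        rw [projRed_apply_lt h (Finset.mem_filter.mp hi).2]
    rw [monomial_eq_prod, monomial_eq_prod, prod_eq_prod_lt_mul_top h,
      prod_eq_prod_lt_mul_top h2, hmax, map_mul,
      pi_prod_swap hq h (Finset.univ.filter (· < μ.support.max' h))
        (fun i hi => (Finset.mem_filter.mp hi).2) _ hμℓ, hkey, ← map_mul]
  · have hμ : μ = 0 := Finsupp.support_eq_empty.mp (Finset.not_nonempty_iff_eq_empty.mp h)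
    have : projRed q μ = 0 := by rw [hμ, projRed, dif_neg (by simp)]
    rw [this, hμ]

lemma sub_polyRed_mem (hq : 2 ≤ q) (f : MvPolynomial (Fin (m + 1)) k) :
    f - polyRed q f ∈ fermatIdeal q m k := by
  rw [← Ideal.Quotient.eq]
  conv_lhs => rw [← support_sum_monomial_coeff f]
  rw [polyRed, map_sum, map_sum]
  exact Finset.sum_congr rfl fun μ _ => pi_monomial hq μ _

end Fermat

section Vanish

variable {q : ℕ} {Fq : Type} [Field Fq] [Fintype Fq]
  {k : Type} [Field k] [Algebra Fq k]

lemma aux_vanish (hq : Fintype.card Fq = q) :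
    ∀ (n : ℕ) (P : MvPolynomial (Fin n) k),
      (∀ i, degreeOf i P ≤ q - 1) →
      (∀ a : Fin n → Fq, eval (fun i => algebraMap Fq k (a i)) P = 0) → P = 0 := by
  intro n
  induction n with
  | zero =>
    intro P _ h0
    have h1 := h0 (fun i => i.elim0)
    rw [eq_C_of_isEmpty P] at h1 ⊢
    rw [eval_C] at h1
    rw [h1, map_zero]
  | succ n ih =>
    intro P hdeg h0
    have hq1 : 1 ≤ q := by
      have := Fintype.card_pos (α := Fq); omega
    have hQ : ∀ j, (finSuccEquiv k n P).coeff j = 0 := by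
      intro j
      refine ih _ (fun i => le_trans (degreeOf_coeff_finSuccEquiv P i j) (hdeg i.succ)) ?_
      intro a
      have hmap : Polynomial.map (eval fun i => algebraMap Fq k (a i)) (finSuccEquiv k n P) = 0 := by
        apply Polynomial.eq_zero_of_natDegree_lt_card_of_eval_eq_zero _
          (f := fun b : Fq => algebraMap Fq k b)
          (fun x y hxy => (algebraMap Fq k).injective hxy)
        · intro b
          have h1 := h0 (Fin.cons b a)
          have h2 : (fun i => algebraMap Fq k ((Fin.cons b a : Fin (n+1) → Fq) i))
              = Fin.cons (algebraMap Fq k b) (fun i => algebraMap Fq k (a i)) := by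
            funext i
            refine Fin.cases ?_ (fun i => ?_) i <;> simp
          rw [h2, eval_eq_eval_mv_eval'] at h1
          exact h1
        · calc (Polynomial.map (eval fun i => algebraMap Fq k (a i))
                (finSuccEquiv k n P)).natDegree
              ≤ (finSuccEquiv k n P).natDegree := Polynomial.natDegree_map_le
            _ = degreeOf 0 P := natDegree_finSuccEquiv P
            _ < Fintype.card Fq := by rw [hq]; have := hdeg 0; omega
      have := congrArg (fun p => Polynomial.coeff p j) hmap
      simpa [Polynomial.coeff_map] using this
    have hfin : finSuccEquiv k n P = 0 := Polynomial.ext fun j => by rw [hQ]; simp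
    have := congrArg (finSuccEquiv k n).symm hfin
    rwa [AlgEquiv.symm_apply_apply, map_zero] at this

end Vanish

section Core

variable {q m : ℕ} {Fq : Type} [Field Fq] [Fintype Fq]
  {k : Type} [Field k] [Algebra Fq k]

lemma reduced_eq_zero (hq : Fintype.card Fq = q)
    {h : MvPolynomial (Fin (m + 1)) k} (hred : polyRed q h = h)
    (hmem : h ∈ fermatIdeal q m k) : h = 0 := by
  classical
  have hq2 : 2 ≤ q := by rw [← hq]; exact Fintype.one_lt_card
  set K := AlgebraicClosure k with hK
  set ι : k →+* K := algebraMap k K with hι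
  set ψ : Fq →+* k := algebraMap Fq k with hψ
  have hpowq : ∀ b : Fq, b ^ q = b := by
    intro b; rw [← hq]; exact FiniteField.pow_card b
  -- Step A : evaluation of h at scaled F_q-points vanishes
  have hgen : ∀ (l : K) (a : Fin (m + 1) → Fq),
      eval₂ ι (fun i => l * ι (ψ (a i))) h = 0 := by
    intro l a
    have hker : fermatIdeal q m k ≤
        RingHom.ker (eval₂Hom ι (fun i => l * ι (ψ (a i)))) := by
      rw [fermatIdeal, Ideal.span_le]
      rintro p ⟨i, j, hij, rfl⟩
      have hu : ∀ i : Fin (m + 1), (ι (ψ (a i))) ^ q = ι (ψ (a i)) := by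
        intro i
        rw [← map_pow, ← map_pow, hpowq]
      simp only [SetLike.mem_coe, RingHom.mem_ker, map_sub, map_mul, map_pow, eval₂Hom_X']
      rw [mul_pow, mul_pow, hu i, hu j]
      ring
    have := hker hmem
    rwa [RingHom.mem_ker, coe_eval₂Hom] at this
  -- Step B : for each degree and point, the degree-part evaluation vanishes
  have key : ∀ (a : Fin (m + 1) → Fq) (d : ℕ),
      ∑ μ ∈ h.support.filter (fun μ => d = ∑ i, μ i),
        coeff μ h * ∏ i, ψ (a i) ^ μ i = 0 := by
    intro a d
    set P : Polynomial K := ∑ μ ∈ h.support,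
      Polynomial.C (ι (coeff μ h * ∏ i, ψ (a i) ^ μ i)) * Polynomial.X ^ (∑ i, μ i) with hP
    have hPeval : ∀ l : K, P.eval l = 0 := by
      intro l
      have hev := hgen l a
      rw [eval₂_eq] at hev
      rw [hP, Polynomial.eval_finset_sum, ← hev]
      refine Finset.sum_congr rfl fun μ _ => ?_
      rw [Polynomial.eval_mul, Polynomial.eval_C, Polynomial.eval_pow, Polynomial.eval_X]
      have hprod : ∏ i ∈ μ.support, (l * ι (ψ (a i))) ^ μ i
          = ∏ i, (l * ι (ψ (a i))) ^ μ i := by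
        refine Finset.prod_subset (Finset.subset_univ _) fun i _ hi => ?_
        rw [Finsupp.notMem_support_iff.mp hi, pow_zero]
      rw [hprod]
      simp only [mul_pow, Finset.prod_mul_distrib, Finset.prod_pow_eq_pow_sum,
        map_mul, map_prod, map_pow]
      ring
    have hP0 : P = 0 := Polynomial.zero_of_eval_zero P hPeval
    have hcoeff : P.coeff d = 0 := by rw [hP0]; simp
    rw [hP, Polynomial.finset_sum_coeff] at hcoeff
    simp only [Polynomial.coeff_C_mul, Polynomial.coeff_X_pow, mul_ite, mul_one,
      mul_zero] at hcoeff
    rw [← Finset.sum_filter] at hcoeff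
    have hι0 : ι (∑ μ ∈ h.support.filter (fun μ => d = ∑ i, μ i),
        coeff μ h * ∏ i, ψ (a i) ^ μ i) = 0 := by
      rw [map_sum]; exact hcoeff
    exact ι.injective (hι0.trans (map_zero ι).symm)
  -- Step C : conclude h = 0
  have hfix : ∀ μ ∈ h.support, projRed q μ = μ := by
    intro μ hμ
    rw [← hred] at hμ
    exact projRed_fix_of_mem_support hμ
  by_contra hne
  obtain ⟨μ₀, hμ₀⟩ : h.support.Nonempty :=
    Finset.nonempty_iff_ne_empty.mpr fun hcon => hne (MvPolynomial.support_eq_empty.mp hcon)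
  set d := ∑ i, μ₀ i with hd
  set T := h.support.filter (fun μ => d = ∑ i, μ i) with hT
  have hμ₀T : μ₀ ∈ T := Finset.mem_filter.mpr ⟨hμ₀, rfl⟩
  set star : (Fin (m + 1) →₀ ℕ) → (Fin (m + 1) →₀ ℕ) :=
    fun μ => Finsupp.mapRange (redExp q) (redExp_zero q) μ with hstar
  have hstar_apply : ∀ (μ : Fin (m + 1) →₀ ℕ) i, star μ i = redExp q (μ i) :=
    fun μ i => Finsupp.mapRange_apply
  have hsupp_star : ∀ μ : Fin (m + 1) →₀ ℕ, (star μ).support = μ.support := by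
    intro μ; ext i
    simp only [Finsupp.mem_support_iff, hstar_apply, ne_eq, redExp_eq_zero_iff]
  have hstar_le : ∀ (μ : Fin (m + 1) →₀ ℕ) i, star μ i ≤ q - 1 := by
    intro μ i; rw [hstar_apply]; exact redExp_le q hq2 (μ i)
  have hinj : ∀ μ ∈ T, ∀ ν ∈ T, star μ = star ν → μ = ν := by
    intro μ hμT ν hνT hsμν
    have hsupp : μ.support = ν.support := by rw [← hsupp_star μ, ← hsupp_star ν, hsμν]
    by_cases hc : μ.support.Nonempty
    · set ℓ := μ.support.max' hc with hℓ
      have hcν : ν.support.Nonempty := hsupp ▸ hc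
      have hℓν : ν.support.max' hcν = ℓ := by
        refine le_antisymm (Finset.max'_le _ _ _ fun i hi => ?_)
          (Finset.le_max' _ _ ?_)
        · exact Finset.le_max' _ _ (hsupp ▸ hi)
        · exact hsupp ▸ Finset.max'_mem _ hc
      have hoff : ∀ i, i ≠ ℓ → μ i = ν i := by
        intro i hiℓ
        rcases lt_or_gt_of_ne hiℓ with hlt | hgt
        · have h1 : μ i = redExp q (μ i) := by
            conv_lhs => rw [← hfix μ (Finset.mem_filter.mp hμT).1]
            rw [projRed_apply_lt hc hlt]
          have h2 : ν i = redExp q (ν i) := by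
            conv_lhs => rw [← hfix ν (Finset.mem_filter.mp hνT).1]
            rw [projRed_apply_lt hcν (by rw [hℓν]; exact hlt)]
          rw [h1, h2, ← hstar_apply, ← hstar_apply, hsμν]
        · rw [apply_eq_zero_of_max'_lt hc hgt,
            apply_eq_zero_of_max'_lt hcν (by rw [hℓν]; exact hgt)]
      have hsumeq : (∑ i, μ i) = ∑ i, ν i := by
        rw [← (Finset.mem_filter.mp hμT).2, ← (Finset.mem_filter.mp hνT).2]
      have e1 : ∑ i, μ i = μ ℓ + ∑ i ∈ Finset.univ.erase ℓ, μ i :=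
        (Finset.add_sum_erase _ _ (Finset.mem_univ ℓ)).symm
      have e2 : ∑ i, ν i = ν ℓ + ∑ i ∈ Finset.univ.erase ℓ, ν i :=
        (Finset.add_sum_erase _ _ (Finset.mem_univ ℓ)).symm
      have e3 : ∑ i ∈ Finset.univ.erase ℓ, μ i = ∑ i ∈ Finset.univ.erase ℓ, ν i :=
        Finset.sum_congr rfl fun i hi => hoff i (Finset.ne_of_mem_erase hi)
      have hsum : μ ℓ = ν ℓ := by omega
      ext i
      by_cases hiℓ : i = ℓ
      · rw [hiℓ]; exact hsum
      · exact hoff i hiℓ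
    · have h1 : μ = 0 := Finsupp.support_eq_empty.mp (Finset.not_nonempty_iff_eq_empty.mp hc)
      have h2 : ν = 0 := Finsupp.support_eq_empty.mp
        (by rw [← hsupp]; exact Finset.not_nonempty_iff_eq_empty.mp hc)
      rw [h1, h2]
  set G : MvPolynomial (Fin (m + 1)) k := ∑ μ ∈ T, monomial (star μ) (coeff μ h) with hG
  have hGcoeff : ∀ ν, coeff ν G = ∑ μ ∈ T, if star μ = ν then coeff μ h else 0 := by
    intro ν
    rw [hG, coeff_sum]
    exact Finset.sum_congr rfl fun μ _ => coeff_monomial ν (star μ) _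
  have hGdeg : ∀ i, degreeOf i G ≤ q - 1 := by
    intro i
    rw [degreeOf_le_iff]
    intro ν hν
    have hc := MvPolynomial.mem_support_iff.mp hν
    rw [hGcoeff] at hc
    obtain ⟨μ, _, hne'⟩ := Finset.exists_ne_zero_of_sum_ne_zero hc
    have hstareq : star μ = ν := by by_contra hcon; simp [hcon] at hne'
    rw [← hstareq]
    exact hstar_le μ i
  have hGeval : ∀ a : Fin (m + 1) → Fq, eval (fun i => ψ (a i)) G = 0 := by
    intro a
    rw [hG, map_sum]
    have hterm : ∀ μ ∈ T, eval (fun i => ψ (a i)) (monomial (star μ) (coeff μ h))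
        = coeff μ h * ∏ i, ψ (a i) ^ μ i := by
      intro μ _
      rw [eval_monomial]
      congr 1
      rw [Finsupp.prod_fintype _ _ fun i => pow_zero _]
      refine Finset.prod_congr rfl fun i _ => ?_
      rw [hstar_apply]
      exact pow_redExp hq2 (ψ (a i)) (by rw [← map_pow, hpowq]) (μ i)
    rw [Finset.sum_congr rfl hterm]
    exact key a d
  have hG0 : G = 0 := aux_vanish hq (m + 1) G hGdeg hGeval
  have hfinal : coeff μ₀ h = 0 := by
    have h1 : coeff (star μ₀) G = coeff μ₀ h := by
      rw [hGcoeff, Finset.sum_eq_single_of_mem μ₀ hμ₀T]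
      · rw [if_pos rfl]
      · intro μ hμT hne'
        rw [if_neg fun hcon => hne' (hinj μ hμT μ₀ hμ₀T hcon)]
    rw [hG0] at h1
    simpa using h1.symm
  exact (MvPolynomial.mem_support_iff.mp hμ₀) hfinal

end Core

/-- The leading exponent (exponent vector of the leading monomial) of a multivariate
polynomial with respect to a monomial order. -/
noncomputable def lmExp {σ : Type} (mo : MonomialOrder σ) {R : Type} [CommSemiring R]
    (f : MvPolynomial σ R) : σ →₀ ℕ :=
  mo.toSyn.symm (f.support.sup fun μ => mo.toSyn μ)

/-- Every coset of `Γ_q(k)` contains a unique projectively reduced polynomial, namely the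
projective reduction of any of its members. -/
theorem coset_unique_reduced (q m : ℕ)
    (Fq : Type) [Field Fq] [Fintype Fq] (hq : Fintype.card Fq = q)
    (k : Type) [Field k] [Algebra Fq k] [Algebra.IsAlgebraic Fq k]
    (f : MvPolynomial (Fin (m + 1)) k) :
    (polyRed q (polyRed q f) = polyRed q f ∧ f - polyRed q f ∈ fermatIdeal q m k) ∧
    ∀ g : MvPolynomial (Fin (m + 1)) k,
      polyRed q g = g → f - g ∈ fermatIdeal q m k → g = polyRed q f := by
  have hq2 : 2 ≤ q := by rw [← hq]; exact Fintype.one_lt_card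
  refine ⟨⟨polyRed_polyRed f, sub_polyRed_mem hq2 f⟩, ?_⟩
  intro g hg hfg
  have hmem : g - polyRed q f ∈ fermatIdeal q m k := by
    have h1 := Ideal.sub_mem _ (sub_polyRed_mem hq2 f) hfg
    have h2 : (f - polyRed q f) - (f - g) = g - polyRed q f := by ring
    rwa [h2] at h1
  have hred : polyRed q (g - polyRed q f) = g - polyRed q f := by
    rw [polyRed_sub, hg, polyRed_polyRed]
  exact sub_eq_zero.mp (reduced_eq_zero hq hred hmem)
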